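/- Define a_k(t) = (1/√(2πt)) ∫_ℝ e^{−x²/(2t)} e^{−k|x|} dx for k ≥ 1, t > 0, with a_k(0) = 1. For any real sequence (R_j)_{j≥2} that is conditionally positive definite (i.e. Σ_{j,k=1}^r α_j conj(α_k) R_{j+k} ≥ 0 for all r and all complex α_1,…,α_r) and any constant c ≥ 0, the sequence R'_2 = (1 − a_1(t))c + a_1(t)R_2, R'_{k+1} = a_k(t)R_{k+1} for k ≥ 2 (with R'_1 = 0) is conditionally positive definite. -/

import Mathlib

open MeasureTheory Real


/-- a_k(t) = (1/√(2πt)) ∫_ℝ e^{−x²/(2t)} e^{−k|x|} dx for t > 0, with a_k(0) = 1. -/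
noncomputable def aStable (k : ℕ) (t : ℝ) : ℝ :=
  if t = 0 then 1
  else (Real.sqrt (2 * Real.pi * t))⁻¹ *
    ∫ x : ℝ, Real.exp (-(x ^ 2 / (2 * t))) * Real.exp (-((k : ℝ) * |x|))

/-- A real sequence (R_j)_{j≥2} is conditionally positive definite if
Σ_{j,k=1}^r α_j conj(α_k) R_{j+k} ≥ 0 for all r and all complex α_1, …, α_r. -/
def CondPosDef (R : ℕ → ℝ) : Prop :=
  ∀ (r : ℕ) (α : Fin r → ℂ),
    0 ≤ (∑ j : Fin r, ∑ k : Fin r,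
          α j * (starRingEnd ℂ) (α k) * ((R ((j : ℕ) + (k : ℕ) + 2) : ℝ) : ℂ)).re ∧
    (∑ j : Fin r, ∑ k : Fin r,
          α j * (starRingEnd ℂ) (α k) * ((R ((j : ℕ) + (k : ℕ) + 2) : ℝ) : ℂ)).im = 0

lemma re_form {r : ℕ} (α : Fin r → ℂ) (f : Fin r → Fin r → ℝ) :
    (∑ j : Fin r, ∑ k : Fin r, α j * (starRingEnd ℂ) (α k) * ((f j k : ℝ) : ℂ)).re
      = ∑ j : Fin r, ∑ k : Fin r, (α j * (starRingEnd ℂ) (α k)).re * f j k := by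
  rw [Complex.re_sum]
  refine Finset.sum_congr rfl fun j _ => ?_
  rw [Complex.re_sum]
  refine Finset.sum_congr rfl fun k _ => ?_
  simp [Complex.mul_re, Complex.ofReal_re, Complex.ofReal_im]

lemma im_form {r : ℕ} (α : Fin r → ℂ) (f : ℕ → ℝ) :
    (∑ j : Fin r, ∑ k : Fin r,
      α j * (starRingEnd ℂ) (α k) * ((f ((j : ℕ) + (k : ℕ)) : ℝ) : ℂ)).im = 0 := by
  apply Complex.conj_eq_iff_im.mp
  rw [map_sum, Finset.sum_comm]
  refine Finset.sum_congr rfl fun j _ => ?_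
  rw [map_sum]
  refine Finset.sum_congr rfl fun k _ => ?_
  simp only [map_mul, Complex.conj_conj, Complex.conj_ofReal]
  rw [add_comm (k : ℕ)]
  ring

lemma integrable_gm (t : ℝ) (ht : 0 < t) (m : ℝ) (hm : 0 ≤ m) :
    Integrable (fun x : ℝ => Real.exp (-(x ^ 2 / (2 * t))) * Real.exp (-(m * |x|))) := by
  have hb : (0:ℝ) < (2 * t)⁻¹ := by positivity
  have heq : ∀ x : ℝ, -(x ^ 2 / (2 * t)) = -(2 * t)⁻¹ * x ^ 2 := fun x => by ring
  have h1 : Integrable (fun x : ℝ => Real.exp (-(x ^ 2 / (2 * t)))) := by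
    simp only [heq]; exact integrable_exp_neg_mul_sq hb
  have h3 : Integrable (fun x : ℝ =>
      Real.exp (-(m * |x|)) * Real.exp (-(x ^ 2 / (2 * t)))) := by
    refine h1.bdd_mul (c := 1) ?_ (Filter.Eventually.of_forall fun x => ?_)
    · exact (Real.continuous_exp.comp (by continuity)).aestronglyMeasurable
    · rw [Real.norm_eq_abs, abs_of_pos (Real.exp_pos _)]
      exact Real.exp_le_one_iff.mpr (neg_nonpos.mpr (mul_nonneg hm (abs_nonneg _)))
  simpa [mul_comm] using h3

lemma norm_gauss (t : ℝ) (ht : 0 < t) :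
    (Real.sqrt (2 * Real.pi * t))⁻¹ * ∫ x : ℝ, Real.exp (-(x ^ 2 / (2 * t))) = 1 := by
  have heq : ∀ x : ℝ, -(x ^ 2 / (2 * t)) = -(2 * t)⁻¹ * x ^ 2 := fun x => by ring
  simp only [heq]
  rw [integral_gaussian]
  have h3 : Real.pi / (2 * t)⁻¹ = 2 * Real.pi * t := by field_simp
  rw [h3, inv_mul_cancel₀]
  exact (Real.sqrt_pos.mpr (by positivity)).ne'

lemma integrable_gauss (t : ℝ) (ht : 0 < t) :
    Integrable (fun x : ℝ => Real.exp (-(x ^ 2 / (2 * t)))) := by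
  simpa using integrable_gm t ht 0 le_rfl

lemma aStable_le_one (k : ℕ) (t : ℝ) (ht : 0 ≤ t) : aStable k t ≤ 1 := by
  rcases eq_or_lt_of_le ht with h | h
  · simp [aStable, ← h]
  · unfold aStable
    rw [if_neg h.ne']
    have hmono : (∫ x : ℝ, Real.exp (-(x ^ 2 / (2 * t))) * Real.exp (-((k:ℝ) * |x|)))
        ≤ ∫ x : ℝ, Real.exp (-(x ^ 2 / (2 * t))) := by
      refine integral_mono (integrable_gm t h k (by positivity)) (integrable_gauss t h)
        fun x => ?_
      exact mul_le_of_le_one_right (Real.exp_pos _).le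
        (Real.exp_le_one_iff.mpr (neg_nonpos.mpr (by positivity)))
    calc (Real.sqrt (2 * Real.pi * t))⁻¹ * ∫ x : ℝ,
          Real.exp (-(x ^ 2 / (2 * t))) * Real.exp (-((k:ℝ) * |x|))
        ≤ (Real.sqrt (2 * Real.pi * t))⁻¹ * ∫ x : ℝ, Real.exp (-(x ^ 2 / (2 * t))) :=
          mul_le_mul_of_nonneg_left hmono (by positivity)
      _ = 1 := norm_gauss t h

lemma Rprime_eq (t c : ℝ) (R : ℕ → ℝ) (n : ℕ) :
    (if n + 2 ≤ 1 then (0:ℝ)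
      else if n + 2 = 2 then (1 - aStable 1 t) * c + aStable 1 t * R 2
      else aStable (n + 2 - 1) t * R (n + 2))
    = aStable (n + 1) t * R (n + 2) + (if n = 0 then (1 - aStable 1 t) * c else 0) := by
  rcases n with _ | m
  · norm_num; ring
  · have h1 : ¬ (m + 1 + 2 ≤ 1) := by omega
    have h2 : ¬ (m + 1 + 2 = 2) := by omega
    have h3 : ¬ (m + 1 = 0) := by omega
    rw [if_neg h1, if_neg h2, if_neg h3, add_zero]
    norm_num

/-- if (R_j)_{j≥2} is conditionally positive definite and c ≥ 0, then the
time-evolved sequence R'_1 = 0, R'_2 = (1−a₁(t))c + a₁(t)R₂, R'_{k+1} = a_k(t)R_{k+1}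
(k ≥ 2) is conditionally positive definite. -/
theorem evolved_free_cumulants_condPosDef
    (t c : ℝ) (ht : 0 ≤ t) (hc : 0 ≤ c) (R : ℕ → ℝ) (hR : CondPosDef R) :
    CondPosDef (fun j =>
      if j ≤ 1 then 0
      else if j = 2 then (1 - aStable 1 t) * c + aStable 1 t * R 2
      else aStable (j - 1) t * R j) := by
  intro r α
  simp only [Rprime_eq t c R]
  constructor
  · -- real part
    rw [re_form α (fun j k => aStable ((j:ℕ) + (k:ℕ) + 1) t * R ((j:ℕ) + (k:ℕ) + 2)
        + (if (j:ℕ) + (k:ℕ) = 0 then (1 - aStable 1 t) * c else 0))]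
    simp only [mul_add]
    rw [Finset.sum_congr rfl fun j _ => Finset.sum_add_distrib, Finset.sum_add_distrib]
    refine add_nonneg ?_ ?_
    · -- main term
      rcases eq_or_lt_of_le ht with h | h
      · -- t = 0
        rw [← h]
        have h1 : ∀ n : ℕ, aStable n 0 = 1 := fun n => by simp [aStable]
        simp only [h1, one_mul]
        have h0 := (hR r α).1
        rw [re_form α (fun j k => R ((j:ℕ) + (k:ℕ) + 2))] at h0
        exact h0
      · -- t > 0
        have hC : (0:ℝ) ≤ (Real.sqrt (2 * Real.pi * t))⁻¹ := by positivity
        have ha : ∀ n : ℕ, aStable n t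
            = (Real.sqrt (2 * Real.pi * t))⁻¹ *
              ∫ x : ℝ, Real.exp (-(x ^ 2 / (2 * t))) * Real.exp (-((n : ℝ) * |x|)) := by
          intro n; unfold aStable; rw [if_neg h.ne']
        have hint : ∀ j k : Fin r, Integrable (fun x : ℝ =>
            (α j * (starRingEnd ℂ) (α k)).re * R ((j:ℕ) + (k:ℕ) + 2) *
              (Real.exp (-(x ^ 2 / (2 * t))) *
                Real.exp (-(((((j:ℕ) + (k:ℕ) + 1 : ℕ)) : ℝ) * |x|)))) := fun j k =>
          (integrable_gm t h _ (by positivity)).const_mul _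
        have key : ∀ j k : Fin r,
            (α j * (starRingEnd ℂ) (α k)).re *
              (aStable ((j:ℕ) + (k:ℕ) + 1) t * R ((j:ℕ) + (k:ℕ) + 2))
            = (Real.sqrt (2 * Real.pi * t))⁻¹ *
              ∫ x : ℝ, (α j * (starRingEnd ℂ) (α k)).re * R ((j:ℕ) + (k:ℕ) + 2) *
                (Real.exp (-(x ^ 2 / (2 * t))) *
                  Real.exp (-(((((j:ℕ) + (k:ℕ) + 1 : ℕ)) : ℝ) * |x|))) := by
          intro j k
          rw [ha, MeasureTheory.integral_const_mul]
          ring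
        simp_rw [key, ← Finset.mul_sum]
        have swap : ∑ j : Fin r, ∑ k : Fin r,
            (∫ x : ℝ, (α j * (starRingEnd ℂ) (α k)).re * R ((j:ℕ) + (k:ℕ) + 2) *
              (Real.exp (-(x ^ 2 / (2 * t))) *
                Real.exp (-(((((j:ℕ) + (k:ℕ) + 1 : ℕ)) : ℝ) * |x|))))
            = ∫ x : ℝ, ∑ j : Fin r, ∑ k : Fin r,
                (α j * (starRingEnd ℂ) (α k)).re * R ((j:ℕ) + (k:ℕ) + 2) *
                  (Real.exp (-(x ^ 2 / (2 * t))) *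
                    Real.exp (-(((((j:ℕ) + (k:ℕ) + 1 : ℕ)) : ℝ) * |x|))) := by
          rw [integral_finset_sum _ fun j _ => integrable_finset_sum _ fun k _ => hint j k]
          exact Finset.sum_congr rfl fun j _ =>
            (integral_finset_sum _ fun k _ => hint j k).symm
        rw [swap]
        refine mul_nonneg hC (integral_nonneg ?_)
        intro x
        simp only [Pi.zero_apply]
        -- pointwise positivity via hR with modified coefficients
        set β : Fin r → ℂ :=
          fun j => α j * ((Real.exp (-((((j:ℕ) : ℝ) + 2⁻¹) * |x|)) : ℝ) : ℂ) with hβdef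
        have h0 := (hR r β).1
        rw [re_form β (fun j k => R ((j:ℕ) + (k:ℕ) + 2))] at h0
        have hterm : ∀ j k : Fin r,
            (α j * (starRingEnd ℂ) (α k)).re * R ((j:ℕ) + (k:ℕ) + 2) *
              (Real.exp (-(x ^ 2 / (2 * t))) *
                Real.exp (-(((((j:ℕ) + (k:ℕ) + 1 : ℕ)) : ℝ) * |x|)))
            = Real.exp (-(x ^ 2 / (2 * t))) *
              ((β j * (starRingEnd ℂ) (β k)).re * R ((j:ℕ) + (k:ℕ) + 2)) := by
          intro j k
          have hβ : β j * (starRingEnd ℂ) (β k)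
              = (α j * (starRingEnd ℂ) (α k)) *
                (((Real.exp (-((((j:ℕ) : ℝ) + 2⁻¹) * |x|)) *
                  Real.exp (-((((k:ℕ) : ℝ) + 2⁻¹) * |x|)) : ℝ)) : ℂ) := by
            simp only [hβdef, map_mul, Complex.conj_ofReal, Complex.ofReal_mul]
            ring
          have hre : (β j * (starRingEnd ℂ) (β k)).re
              = (α j * (starRingEnd ℂ) (α k)).re *
                (Real.exp (-((((j:ℕ) : ℝ) + 2⁻¹) * |x|)) *
                  Real.exp (-((((k:ℕ) : ℝ) + 2⁻¹) * |x|))) := by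
            rw [hβ]
            simp only [Complex.mul_re, Complex.ofReal_re, Complex.ofReal_im,
              mul_zero, zero_mul, sub_zero]
          have hsplit : Real.exp (-(((((j:ℕ) + (k:ℕ) + 1 : ℕ)) : ℝ) * |x|))
              = Real.exp (-((((j:ℕ) : ℝ) + 2⁻¹) * |x|)) *
                Real.exp (-((((k:ℕ) : ℝ) + 2⁻¹) * |x|)) := by
            rw [← Real.exp_add]
            congr 1
            push_cast
            ring
          rw [hre, hsplit]
          ring
        simp_rw [hterm, ← Finset.mul_sum]
        exact mul_nonneg (Real.exp_pos _).le h0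
    · -- correction term
      refine Finset.sum_nonneg fun j _ => Finset.sum_nonneg fun k _ => ?_
      by_cases hjk : (j:ℕ) + (k:ℕ) = 0
      · have hj0 : (j:ℕ) = 0 := by omega
        have hk : k = j := Fin.ext (by omega)
        rw [if_pos hjk, hk, Complex.mul_conj]
        refine mul_nonneg (by simpa using Complex.normSq_nonneg (α j)) ?_
        exact mul_nonneg (sub_nonneg.mpr (aStable_le_one 1 t ht)) hc
      · rw [if_neg hjk, mul_zero]
  · exact im_form α (fun n => aStable (n + 1) t * R (n + 2)
      + (if n = 0 then (1 - aStable 1 t) * c else 0))
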